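/- For any x > 0 and y > 0, Γ(x,y) ≥ exp((x+y-2) Γ'(1)), where Γ'(1) is the derivative of the Euler gamma function at 1 (equal to -γ, minus the Euler–Mascheroni constant). -/

import Mathlib

open Real Set intervalIntegral

noncomputable def biGamma (x y : ℝ) : ℝ :=
  ∫ t in (0:ℝ)..1, (-Real.log t) ^ (x - 1) * (-Real.log (1 - t)) ^ (y - 1)

open MeasureTheory

section lemmas


lemma intOn_log_mul_exp : IntegrableOn (fun t : ℝ => Real.log t * Real.exp (-t)) (Ioi 0) := by
  have h := (mellin_hasDerivAt_of_isBigO_rpow (E := ℂ) (a := 2) (b := 0)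
    (f := fun x => (Real.exp (-x) : ℂ)) (s := 1) ?_ ?_ (by norm_num) ?_ (by norm_num)).1
  · rw [MellinConvergent] at h
    have h2 : IntegrableOn (fun t : ℝ => ((Real.log t * Real.exp (-t) : ℝ) : ℂ)) (Ioi 0) := by
      refine h.congr_fun (fun t ht => ?_) measurableSet_Ioi
      simp only [show (1:ℂ)-1 = 0 by ring, Complex.cpow_zero, smul_eq_mul, one_smul, one_mul,
        Complex.real_smul, Complex.ofReal_mul]
    have h3 := h2.re
    refine IntegrableOn.congr_fun h3 (fun t ht => RCLike.ofReal_re _) measurableSet_Ioi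
  · refine (Continuous.continuousOn ?_).locallyIntegrableOn measurableSet_Ioi
    exact Complex.continuous_ofReal.comp (Real.continuous_exp.comp continuous_neg)
  · rw [← Asymptotics.isBigO_norm_left]
    simp_rw [Complex.norm_real,
      Asymptotics.isBigO_norm_left]
    simpa only [neg_one_mul] using (isLittleO_exp_neg_mul_rpow_atTop zero_lt_one _).isBigO
  · simp_rw [neg_zero, Real.rpow_zero]
    refine Asymptotics.isBigO_const_of_tendsto (?_ : Filter.Tendsto _ _ (nhds (1 : ℂ))) one_ne_zero
    rw [(by simp : (1 : ℂ) = Real.exp (-0))]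
    exact (Complex.continuous_ofReal.comp (Real.continuous_exp.comp continuous_neg)).continuousWithinAt

lemma hasDerivAt_Gamma_I : HasDerivAt Real.Gamma (∫ t in Ioi (0:ℝ), Real.log t * Real.exp (-t)) 1 := by
  set I : ℝ := ∫ t in Ioi (0:ℝ), Real.log t * Real.exp (-t) with hI
  have h1 : HasDerivAt Complex.GammaIntegral ((I : ℂ)) 1 := by
    have := Complex.hasDerivAt_GammaIntegral (s := 1) (by norm_num)
    convert this using 1
    rw [show ((1:ℂ) - 1) = 0 by ring]
    simp_rw [Complex.cpow_zero, one_mul, ← Complex.ofReal_mul]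
    rw [show ((I:ℂ)) = (RCLike.ofReal I : ℂ) from rfl, ← _root_.integral_ofReal]
    rfl
  have h2 : HasDerivAt Complex.Gamma ((I : ℂ)) 1 := by
    refine h1.congr_of_eventuallyEq ?_
    have : {s : ℂ | 0 < s.re} ∈ nhds (1 : ℂ) := by
      refine IsOpen.mem_nhds ?_ (by norm_num)
      exact isOpen_lt continuous_const Complex.continuous_re
    filter_upwards [this] with s hs
    exact Complex.Gamma_eq_integral hs
  have := h2.real_of_complex
  simpa [Complex.ofReal_re, Complex.Gamma_ofReal] using this


lemma exp_neg_image : (fun u : ℝ => Real.exp (-u)) '' Ioi 0 = Ioo 0 1 := by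
  ext t
  constructor
  · rintro ⟨u, hu, rfl⟩
    exact ⟨Real.exp_pos _, Real.exp_lt_one_iff.mpr (by simpa using hu)⟩
  · rintro ⟨h0, h1⟩
    exact ⟨-Real.log t, by simpa using Real.log_neg h0 h1, by simp [Real.exp_log h0]⟩

lemma one_sub_exp_neg_image : (fun u : ℝ => 1 - Real.exp (-u)) '' Ioi 0 = Ioo 0 1 := by
  have h : (fun u : ℝ => 1 - Real.exp (-u)) = (fun t : ℝ => 1 - t) ∘ (fun u => Real.exp (-u)) := rfl
  rw [h, image_comp, exp_neg_image]
  ext t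
  simp only [mem_image, mem_Ioo]
  constructor
  · rintro ⟨s, ⟨h0, h1⟩, rfl⟩; constructor <;> linarith
  · rintro ⟨h0, h1⟩; exact ⟨1 - t, ⟨by linarith, by linarith⟩, by ring⟩

lemma deriv1 : ∀ u ∈ Ioi (0:ℝ), HasDerivWithinAt (fun u : ℝ => Real.exp (-u))
    (-Real.exp (-u)) (Ioi 0) u := fun u _ => by
  simpa [Function.comp_def] using ((Real.hasDerivAt_exp (-u)).comp u (hasDerivAt_neg u)).hasDerivWithinAt

lemma deriv2 : ∀ u ∈ Ioi (0:ℝ), HasDerivWithinAt (fun u : ℝ => 1 - Real.exp (-u))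
    (Real.exp (-u)) (Ioi 0) u := fun u _ => by
  simpa using (((Real.hasDerivAt_exp (-u)).comp u (hasDerivAt_neg u)).const_sub 1).hasDerivWithinAt

lemma inj1 : InjOn (fun u : ℝ => Real.exp (-u)) (Ioi 0) :=
  fun u _ v _ h => neg_injective (Real.exp_injective h)

lemma inj2 : InjOn (fun u : ℝ => 1 - Real.exp (-u)) (Ioi 0) :=
  fun u _ v _ h => neg_injective (Real.exp_injective (by simp only at h; linarith : Real.exp (-u) = Real.exp (-v)))

lemma subst1 (g : ℝ → ℝ) :
    (∫ t in Ioo (0:ℝ) 1, g (-Real.log t)) = ∫ u in Ioi (0:ℝ), Real.exp (-u) * g u := by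
  rw [← exp_neg_image, integral_image_eq_integral_abs_deriv_smul measurableSet_Ioi deriv1 inj1]
  refine setIntegral_congr_fun measurableSet_Ioi (fun u _ => ?_)
  simp [Real.log_exp, abs_of_pos (Real.exp_pos _), smul_eq_mul]

lemma subst1_int (g : ℝ → ℝ) (h : IntegrableOn (fun u : ℝ => Real.exp (-u) * g u) (Ioi 0)) :
    IntegrableOn (fun t => g (-Real.log t)) (Ioo 0 1) := by
  rw [← exp_neg_image,
    integrableOn_image_iff_integrableOn_abs_deriv_smul measurableSet_Ioi deriv1 inj1]
  refine h.congr_fun (fun u _ => ?_) measurableSet_Ioi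
  simp [Real.log_exp, abs_of_pos (Real.exp_pos _), smul_eq_mul]

lemma subst2 (g : ℝ → ℝ) :
    (∫ t in Ioo (0:ℝ) 1, g (-Real.log (1 - t))) = ∫ u in Ioi (0:ℝ), Real.exp (-u) * g u := by
  rw [← one_sub_exp_neg_image,
    integral_image_eq_integral_abs_deriv_smul measurableSet_Ioi deriv2 inj2]
  refine setIntegral_congr_fun measurableSet_Ioi (fun u _ => ?_)
  simp [Real.log_exp, abs_of_pos (Real.exp_pos _), smul_eq_mul]

lemma subst2_int (g : ℝ → ℝ) (h : IntegrableOn (fun u : ℝ => Real.exp (-u) * g u) (Ioi 0)) :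
    IntegrableOn (fun t => g (-Real.log (1 - t))) (Ioo 0 1) := by
  rw [← one_sub_exp_neg_image,
    integrableOn_image_iff_integrableOn_abs_deriv_smul measurableSet_Ioi deriv2 inj2]
  refine h.congr_fun (fun u _ => ?_) measurableSet_Ioi
  simp [Real.log_exp, abs_of_pos (Real.exp_pos _), smul_eq_mul]


lemma beta_integrable {a b : ℝ} (ha : -1 < a) (hb : -1 < b) :
    IntegrableOn (fun t : ℝ => t ^ a * (1 - t) ^ b) (Ioo 0 1) := by
  have h := (Complex.betaIntegral_convergent (u := (a:ℂ) + 1) (v := (b:ℂ) + 1)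
    (by simpa using by linarith) (by simpa using by linarith))
  rw [intervalIntegrable_iff_integrableOn_Ioo_of_le zero_le_one] at h
  have h2 := h.norm
  refine IntegrableOn.congr_fun h2 (fun t ht => ?_) measurableSet_Ioo
  obtain ⟨h0, h1⟩ := ht
  rw [eq_comm, norm_mul, add_sub_cancel_right, add_sub_cancel_right,
    show ((1:ℂ) - (t:ℂ)) = ((1 - t : ℝ) : ℂ) by push_cast; ring,
    Complex.norm_cpow_eq_rpow_re_of_pos h0, Complex.norm_cpow_eq_rpow_re_of_pos (by linarith),
    Complex.ofReal_re, Complex.ofReal_re]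


lemma neg_log_le {ε t : ℝ} (hε : 0 < ε) (h0 : 0 < t) (h1 : t < 1) :
    -Real.log t ≤ t ^ (-ε) / ε := by
  have h2 : Real.log (t ^ (-ε)) ≤ t ^ (-ε) := by
    have := Real.log_le_sub_one_of_pos (Real.rpow_pos_of_pos h0 (-ε))
    linarith
  rw [Real.log_rpow h0] at h2
  rw [le_div_iff₀ hε]
  nlinarith

lemma one_le_rpow_neg {ε t : ℝ} (hε : 0 ≤ ε) (h0 : 0 < t) (h1 : t ≤ 1) : 1 ≤ t ^ (-ε) := by
  have := Real.rpow_le_rpow_of_nonpos h0 h1 (neg_nonpos.mpr hε)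
  simpa using this

lemma one_sub_le_neg_log {t : ℝ} (h0 : 0 < t) : 1 - t ≤ -Real.log t := by
  have := Real.log_le_sub_one_of_pos h0
  linarith

/-- factor bound -/
lemma factor_bound (p : ℝ) {ε : ℝ} (hε : 0 < ε) :
    ∃ C : ℝ, 0 < C ∧ ∀ t ∈ Ioo (0:ℝ) 1,
      (-Real.log t) ^ p ≤ C * (t ^ (-ε) * (1 - t) ^ min p 0) := by
  rcases le_or_gt p 0 with hp | hp
  · refine ⟨1, one_pos, fun t ⟨h0, h1⟩ => ?_⟩
    rw [min_eq_left hp, one_mul]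
    have h2 : (-Real.log t) ^ p ≤ (1 - t) ^ p :=
      Real.rpow_le_rpow_of_nonpos (by linarith) (one_sub_le_neg_log h0) hp
    calc (-Real.log t) ^ p ≤ (1 - t) ^ p := h2
    _ = 1 * (1 - t) ^ p := (one_mul _).symm
    _ ≤ t ^ (-ε) * (1 - t) ^ p := by
        apply mul_le_mul_of_nonneg_right (one_le_rpow_neg hε.le h0 h1.le)
        exact (Real.rpow_pos_of_pos (by linarith) p).le
  · refine ⟨(p / ε) ^ p, Real.rpow_pos_of_pos (div_pos hp hε) p, fun t ⟨h0, h1⟩ => ?_⟩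
    rw [min_eq_right hp.le, Real.rpow_zero, mul_one]
    have key : -Real.log t ≤ (p / ε) * t ^ (-(ε / p)) := by
      have h3 := neg_log_le (div_pos hε hp) h0 h1
      calc -Real.log t ≤ t ^ (-(ε/p)) / (ε/p) := h3
      _ = p / ε * t ^ (-(ε / p)) := by
          field_simp
    calc (-Real.log t) ^ p ≤ ((p / ε) * t ^ (-(ε / p))) ^ p := by
          apply Real.rpow_le_rpow (by linarith [one_sub_le_neg_log h0]) key hp.le
    _ = (p / ε) ^ p * t ^ (-ε) := by
        rw [Real.mul_rpow (div_pos hp hε).le (Real.rpow_pos_of_pos h0 _).le,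
          ← Real.rpow_mul h0.le]
        congr 2
        field_simp

end lemmas

lemma F_integrable {x y : ℝ} (hx : 0 < x) (hy : 0 < y) :
    IntegrableOn (fun t : ℝ => (-Real.log t) ^ (x - 1) * (-Real.log (1 - t)) ^ (y - 1))
      (Ioo 0 1) := by
  set p := x - 1 with hp
  set q := y - 1 with hq
  have hp1 : -1 < p := by simp [hp]; linarith
  have hq1 : -1 < q := by simp [hq]; linarith
  set m := min (min p 0) (min q 0) with hm
  have hm1 : -1 < m := lt_min (lt_min hp1 (by norm_num)) (lt_min hq1 (by norm_num))
  set ε : ℝ := (1 + m) / 2 with hε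
  have hε0 : 0 < ε := by rw [hε]; linarith
  obtain ⟨C1, hC1, hB1⟩ := factor_bound p hε0
  obtain ⟨C2, hC2, hB2⟩ := factor_bound q hε0
  have hmq : m ≤ min q 0 := min_le_right _ _
  have hmp : m ≤ min p 0 := min_le_left _ _
  have ha : -1 < min q 0 - ε := by rw [hε]; linarith
  have hb : -1 < min p 0 - ε := by rw [hε]; linarith
  have hDint : Integrable (fun t : ℝ => (C1 * C2) * (t ^ (min q 0 - ε) * (1 - t) ^ (min p 0 - ε)))
      (volume.restrict (Ioo 0 1)) := (beta_integrable ha hb).const_mul _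
  refine hDint.mono' ?_ ?_
  · have c1 : ContinuousOn (fun t : ℝ => -Real.log t) (Ioo 0 1) := by
      refine (Real.continuousOn_log.mono ?_).neg
      intro t ht; exact ne_of_gt ht.1
    have c2 : ContinuousOn (fun t : ℝ => -Real.log (1 - t)) (Ioo 0 1) := by
      refine ((Real.continuousOn_log.comp (continuous_const.sub continuous_id).continuousOn
        (fun t ht => ?_)).neg)
      simp only [mem_compl_iff, mem_singleton_iff]
      intro h; have := ht.2; simp at h; linarith
    refine ((c1.rpow_const ?_).mul
      (c2.rpow_const ?_)).aestronglyMeasurable measurableSet_Ioo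
    · intro t ht
      left
      have h2 : Real.log t < 0 := Real.log_neg ht.1 ht.2
      simp only [ne_eq, neg_eq_zero]
      linarith
    · intro t ht
      left
      have ha : (0:ℝ) < 1 - t := by linarith [ht.2]
      have hb : (1:ℝ) - t < 1 := by linarith [ht.1]
      have h2 : Real.log (1 - t) < 0 := Real.log_neg ha hb
      simp only [ne_eq, neg_eq_zero]
      linarith
  · filter_upwards [ae_restrict_mem measurableSet_Ioo] with t ht
    obtain ⟨h0, h1⟩ := ht
    have hL1 : 0 < -Real.log t := by simpa using Real.log_neg h0 h1
    have hL2 : 0 < -Real.log (1 - t) := by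
      simpa using Real.log_neg (by linarith : (0:ℝ) < 1 - t) (by linarith : 1 - t < 1)
    rw [Real.norm_eq_abs, abs_of_nonneg (mul_nonneg (Real.rpow_nonneg hL1.le _)
      (Real.rpow_nonneg hL2.le _))]
    have hB2' := hB2 (1 - t) ⟨by linarith, by linarith⟩
    rw [show (1:ℝ) - (1 - t) = t by ring] at hB2'
    calc (-Real.log t) ^ p * (-Real.log (1 - t)) ^ q
        ≤ (C1 * (t ^ (-ε) * (1 - t) ^ min p 0)) * (C2 * ((1 - t) ^ (-ε) * t ^ min q 0)) := by
          refine mul_le_mul (hB1 t ⟨h0, h1⟩) hB2' (Real.rpow_nonneg hL2.le _) ?_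
          exact mul_nonneg hC1.le (mul_nonneg (Real.rpow_nonneg h0.le _)
            (Real.rpow_nonneg (by linarith) _))
      _ = (C1 * C2) * (t ^ (min q 0 - ε) * (1 - t) ^ (min p 0 - ε)) := by
          rw [show min q 0 - ε = -ε + min q 0 by ring, show min p 0 - ε = -ε + min p 0 by ring,
            Real.rpow_add h0, Real.rpow_add (by linarith : (0:ℝ) < 1 - t)]
          ring

lemma g_eq_int {x y : ℝ} :
    IntegrableOn (fun t : ℝ => Real.log (-Real.log t)) (Ioo 0 1) ∧
    IntegrableOn (fun t : ℝ => Real.log (-Real.log (1 - t))) (Ioo 0 1) := by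
  have h : IntegrableOn (fun u : ℝ => Real.exp (-u) * Real.log u) (Ioi 0) := by
    refine IntegrableOn.congr_fun intOn_log_mul_exp (fun u _ => mul_comm _ _) measurableSet_Ioi
  exact ⟨subst1_int Real.log h, subst2_int Real.log h⟩

theorem biGamma_ge_exp (x y : ℝ) (hx : 0 < x) (hy : 0 < y) :
    Real.exp ((x + y - 2) * deriv Real.Gamma 1) ≤ biGamma x y := by
  set I₀ : ℝ := ∫ t in Ioi (0:ℝ), Real.log t * Real.exp (-t) with hI₀
  have hD : deriv Real.Gamma 1 = I₀ := hasDerivAt_Gamma_I.deriv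
  set μ := volume.restrict (Ioo (0:ℝ) 1) with hμ
  haveI : IsProbabilityMeasure μ := ⟨by simp [hμ, Real.volume_Ioo]⟩
  set g : ℝ → ℝ := fun t =>
    (x - 1) * Real.log (-Real.log t) + (y - 1) * Real.log (-Real.log (1 - t)) with hg
  have int1 := (g_eq_int (x := x) (y := y)).1
  have int2 := (g_eq_int (x := x) (y := y)).2
  have hfi : Integrable g μ := (int1.const_mul (x - 1)).add (int2.const_mul (y - 1))
  have hFeq : ∀ t ∈ Ioo (0:ℝ) 1,
      Real.exp (g t) = (-Real.log t) ^ (x - 1) * (-Real.log (1 - t)) ^ (y - 1) := by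
    intro t ⟨h0, h1⟩
    have hL1 : 0 < -Real.log t := by simpa using Real.log_neg h0 h1
    have hL2 : 0 < -Real.log (1 - t) := by
      simpa using Real.log_neg (by linarith : (0:ℝ) < 1 - t) (by linarith : 1 - t < 1)
    rw [hg, Real.exp_add, Real.rpow_def_of_pos hL1, Real.rpow_def_of_pos hL2,
      mul_comm (Real.log (-Real.log t)), mul_comm (Real.log (-Real.log (1 - t)))]
  have hgi : Integrable (fun t => Real.exp (g t)) μ := by
    refine (F_integrable hx hy).congr ?_
    filter_upwards [ae_restrict_mem measurableSet_Ioo] with t ht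
    exact (hFeq t ht).symm
  have jensen := convexOn_exp.map_integral_le (μ := μ) continuous_exp.continuousOn
    isClosed_univ (Filter.Eventually.of_forall (fun _ => mem_univ _)) hfi hgi
  have hIg : ∫ t, g t ∂μ = (x + y - 2) * I₀ := by
    rw [hg, integral_add (int1.const_mul (x - 1)) (int2.const_mul (y - 1)),
      MeasureTheory.integral_const_mul, MeasureTheory.integral_const_mul]
    have e1 : ∫ t, Real.log (-Real.log t) ∂μ = I₀ := by
      rw [hμ, hI₀]
      rw [show (∫ t in Ioo (0:ℝ) 1, Real.log (-Real.log t)) =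
        ∫ u in Ioi (0:ℝ), Real.exp (-u) * Real.log u from subst1 Real.log]
      exact setIntegral_congr_fun measurableSet_Ioi (fun u _ => mul_comm _ _)
    have e2 : ∫ t, Real.log (-Real.log (1 - t)) ∂μ = I₀ := by
      rw [hμ, hI₀]
      rw [show (∫ t in Ioo (0:ℝ) 1, Real.log (-Real.log (1 - t))) =
        ∫ u in Ioi (0:ℝ), Real.exp (-u) * Real.log u from subst2 Real.log]
      exact setIntegral_congr_fun measurableSet_Ioi (fun u _ => mul_comm _ _)
    rw [e1, e2]; ring
  have hbi : biGamma x y = ∫ t, Real.exp (g t) ∂μ := by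
    rw [biGamma, intervalIntegral.integral_of_le zero_le_one,
      MeasureTheory.integral_Ioc_eq_integral_Ioo, hμ]
    exact setIntegral_congr_fun measurableSet_Ioo (fun t ht => (hFeq t ht).symm)
  rw [hD, hbi, ← hIg]
  exact jensen
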